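/- For every finite nonempty set A equipped with a surjective binary relation s^A, there exist a spiral structure M (a finite disjoint union of spirals) and an epimorphism from M onto A. In other words, the class of spiral structures is coinitial in the class of all finite nonempty sets with a surjective binary relation. -/

import Mathlib

/-- Data of a spiral: the set `{1, …, n}` with distinguished left node `x` and
right node `y` satisfying `1 < x < y < n`. -/
structure SpiralData where
  n : ℕ
  x : ℕ
  y : ℕ
  one_lt_x : 1 < x
  x_lt_y : x < y
  y_lt_n : y < n

/-- The spiral relation, on the underlying natural numbers: the pairs `(i, i+1)`
for `1 ≤ i ≤ n - 1`, together with `(x, 1)` and `(n, y)`. -/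
def spiralRelNat (S : SpiralData) (a b : ℕ) : Prop :=
  (1 ≤ a ∧ a < S.n ∧ b = a + 1) ∨ (a = S.x ∧ b = 1) ∨ (a = S.n ∧ b = S.y)

/-- The underlying set `{1, …, n}` of a spiral. -/
def SpiralCarrier (S : SpiralData) : Type := {i : ℕ // 1 ≤ i ∧ i ≤ S.n}

/-- The spiral relation on the carrier. -/
def spiralRel (S : SpiralData) (a b : SpiralCarrier S) : Prop :=
  spiralRelNat S a.1 b.1

/-- The left node of a spiral, as an element of its carrier. -/
def leftNode (S : SpiralData) : SpiralCarrier S :=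
  ⟨S.x, by have := S.one_lt_x; have := S.x_lt_y; have := S.y_lt_n; omega⟩

/-- The right node of a spiral, as an element of its carrier. -/
def rightNode (S : SpiralData) : SpiralCarrier S :=
  ⟨S.y, by have := S.one_lt_x; have := S.x_lt_y; have := S.y_lt_n; omega⟩

/-- The underlying set of a spiral structure: the disjoint union of the
carriers of the spirals `S 0, …, S (k-1)`. -/
def SpiralStructCarrier {k : ℕ} (S : Fin k → SpiralData) : Type :=
  Σ j : Fin k, SpiralCarrier (S j)

/-- The relation of a spiral structure: the union of the spiral relations. -/
def spiralStructRel {k : ℕ} (S : Fin k → SpiralData)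
    (a b : SpiralStructCarrier S) : Prop :=
  a.1 = b.1 ∧ spiralRelNat (S a.1) a.2.1 b.2.1

/-- A map `f` is relation preserving if `rA a b` implies `rB (f a) (f b)`. -/
def RelPres {A B : Type*} (rA : A → A → Prop) (rB : B → B → Prop)
    (f : A → B) : Prop :=
  ∀ a b, rA a b → rB (f a) (f b)

/-- An epimorphism between sets each equipped with a binary relation. -/
def IsEpi1 {A B : Type*} (sA : A → A → Prop) (sB : B → B → Prop)
    (φ : B → A) : Prop :=
  Function.Surjective φ ∧
    ∀ x y, sA x y ↔ ∃ x' y', φ x' = x ∧ φ y' = y ∧ sB x' y'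

/-- A binary relation `s` on `A` is surjective if every point has an outgoing
and an incoming edge. -/
def SurjRel {A : Type*} (s : A → A → Prop) : Prop :=
  ∀ a : A, (∃ b, s a b) ∧ (∃ c, s c a)


/-- Pigeonhole: iterates of a self-map on a finite type are eventually
periodic, with period at least 2. -/
lemma exists_period {A : Type} [Finite A] (g : A → A) (c : A) :
    ∃ i d, 2 ≤ d ∧ g^[i] c = g^[i + d] c := by
  obtain ⟨m, n, hne, heq⟩ :=
    Finite.exists_ne_map_eq_of_infinite (fun k : ℕ => g^[k] c)
  wlog hlt : m < n generalizing m n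
  · exact this n m hne.symm heq.symm (by omega)
  refine ⟨m, 2 * (n - m), by omega, ?_⟩
  have key : g^[m + (n - m)] c = g^[m] c := by
    rw [show m + (n - m) = n by omega]; exact heq.symm
  calc g^[m] c = g^[m + (n - m)] c := key.symm
    _ = g^[n - m] (g^[m] c) := by rw [Nat.add_comm, Function.iterate_add_apply]
    _ = g^[n - m] (g^[m + (n - m)] c) := by rw [key]
    _ = g^[m + 2 * (n - m)] c := by
        rw [show m + 2 * (n - m) = (n - m) + (m + (n - m)) by omega]
        exact (Function.iterate_add_apply _ _ _ _).symm

/-- The spiral associated to one edge. -/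
def mkS (I D P Q : ℕ) (hD : 2 ≤ D) (hQ : 2 ≤ Q) : SpiralData :=
  ⟨I + D + 2 + P + Q, D, I + D + P + 3, by omega, by omega, by omega⟩

/-- The labelling of the spiral: walk backwards from `a` before position
`I + D + 1`, then forwards from `b` afterwards. -/
def mkLabel {A : Type} (pred succ : A → A) (a b : A) (I D : ℕ) (t : ℕ) : A :=
  if t ≤ I + D + 1 then pred^[I + D + 1 - t] a else succ^[t - (I + D + 2)] b

lemma mkLabel_mid {A : Type} (pred succ : A → A) (a b : A) (I D : ℕ) :
    mkLabel pred succ a b I D (I + D + 1) = a := by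
  simp [mkLabel]

lemma mkLabel_mid' {A : Type} (pred succ : A → A) (a b : A) (I D : ℕ) :
    mkLabel pred succ a b I D (I + D + 2) = b := by
  simp [mkLabel]

lemma mkLabel_rel {A : Type} (sA : A → A → Prop) (pred succ : A → A)
    (hpred : ∀ c, sA (pred c) c) (hsucc : ∀ c, sA c (succ c))
    (a b : A) (hab : sA a b) (I D P Q : ℕ) (hD : 2 ≤ D) (hQ : 2 ≤ Q)
    (hID : pred^[I] a = pred^[I + D] a) (hPQ : succ^[P] b = succ^[P + Q] b)
    (t u : ℕ) (h : spiralRelNat (mkS I D P Q hD hQ) t u) :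
    sA (mkLabel pred succ a b I D t) (mkLabel pred succ a b I D u) := by
  rcases h with ⟨ht1, htn, hu⟩ | ⟨hx, hu⟩ | ⟨hn, hu⟩
  · -- path edge (t, t+1)
    subst hu
    have htn' : t < I + D + 2 + P + Q := htn
    by_cases h1 : t + 1 ≤ I + D + 1
    · rw [mkLabel, mkLabel, if_pos (by omega), if_pos h1,
        show I + D + 1 - t = (I + D + 1 - (t + 1)) + 1 by omega,
        Function.iterate_succ_apply']
      exact hpred _
    · by_cases h2 : t ≤ I + D + 1
      · have : t = I + D + 1 := by omega
        subst this
        rw [show I + D + 1 + 1 = I + D + 2 by omega, mkLabel_mid, mkLabel_mid']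
        exact hab
      · rw [mkLabel, mkLabel, if_neg h2, if_neg (by omega),
          show t + 1 - (I + D + 2) = (t - (I + D + 2)) + 1 by omega,
          Function.iterate_succ_apply']
        exact hsucc _
  · -- edge (x, 1)
    subst hu; rw [hx]
    show sA (mkLabel pred succ a b I D D) (mkLabel pred succ a b I D 1)
    rw [mkLabel, mkLabel, if_pos (by omega), if_pos (by omega),
      show I + D + 1 - D = I + 1 by omega,
      show I + D + 1 - 1 = I + D by omega, ← hID, Function.iterate_succ_apply']
    exact hpred _
  · -- edge (n, y)
    subst hu; rw [hn]
    show sA (mkLabel pred succ a b I D (I + D + 2 + P + Q))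
      (mkLabel pred succ a b I D (I + D + P + 3))
    rw [mkLabel, mkLabel, if_neg (by omega), if_neg (by omega),
      show I + D + 2 + P + Q - (I + D + 2) = P + Q by omega,
      show I + D + P + 3 - (I + D + 2) = P + 1 by omega,
      ← hPQ, Function.iterate_succ_apply']
    exact hsucc _

/-- Spiral structures are coinitial in the class of finite nonempty sets with a
surjective binary relation. -/
theorem spiral_structures_coinitial {A : Type} [Fintype A] [Nonempty A]
    (sA : A → A → Prop) (hA : SurjRel sA) :
    ∃ (k : ℕ) (S : Fin k → SpiralData) (φ : SpiralStructCarrier S → A),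
      IsEpi1 sA (spiralStructRel S) φ := by
  classical
  choose succ hsucc using fun a => (hA a).1
  choose pred hpred using fun a => (hA a).2
  set E := {p : A × A // sA p.1 p.2} with hE
  haveI : Fintype E := Fintype.ofFinite E
  choose I D hD hID using fun e : E => exists_period pred e.1.1
  choose P Q hQ hPQ using fun e : E => exists_period succ e.1.2
  set eqv : Fin (Fintype.card E) → E := fun j => (Fintype.equivFin E).symm j with heqv
  set S : Fin (Fintype.card E) → SpiralData :=
    fun j => mkS (I (eqv j)) (D (eqv j)) (P (eqv j)) (Q (eqv j))
      (hD (eqv j)) (hQ (eqv j)) with hS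
  set φ : SpiralStructCarrier S → A :=
    fun z => mkLabel pred succ (eqv z.1).1.1 (eqv z.1).1.2
      (I (eqv z.1)) (D (eqv z.1)) z.2.1 with hφ
  refine ⟨Fintype.card E, S, φ, ?_, ?_⟩
  · -- surjectivity
    intro a
    have hab : sA a (succ a) := hsucc a
    set e : E := ⟨(a, succ a), hab⟩ with he
    set j := (Fintype.equivFin E) e with hj
    have hje : eqv j = e := by simp [heqv, hj]
    refine ⟨⟨j, ⟨I e + D e + 1, ?_⟩⟩, ?_⟩
    · refine ⟨by omega, ?_⟩
      simp only [hS]; rw [hje]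
      show I e + D e + 1 ≤ I e + D e + 2 + P e + Q e
      omega
    · simp only [hφ, hje, mkLabel_mid]; rfl
  · intro x y
    constructor
    · intro hxy
      set e : E := ⟨(x, y), hxy⟩ with he
      set j := (Fintype.equivFin E) e with hj
      have hje : eqv j = e := by simp [heqv, hj]
      have hb1 : 1 ≤ I e + D e + 1 ∧ I e + D e + 1 ≤ (S j).n := by
        refine ⟨by omega, ?_⟩
        simp only [hS]; rw [hje]
        show I e + D e + 1 ≤ I e + D e + 2 + P e + Q e
        omega
      have hb2 : 1 ≤ I e + D e + 2 ∧ I e + D e + 2 ≤ (S j).n := by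
        refine ⟨by omega, ?_⟩
        simp only [hS]; rw [hje]
        show I e + D e + 2 ≤ I e + D e + 2 + P e + Q e
        omega
      refine ⟨⟨j, ⟨I e + D e + 1, hb1⟩⟩, ⟨j, ⟨I e + D e + 2, hb2⟩⟩, ?_, ?_, ?_⟩
      · simp only [hφ, hje, mkLabel_mid]; rfl
      · simp only [hφ, hje, mkLabel_mid']; rfl
      · refine ⟨rfl, Or.inl ⟨?_, ?_, ?_⟩⟩
        · show 1 ≤ I e + D e + 1
          omega
        · show I e + D e + 1 < (S j).n
          simp only [hS]; rw [hje]
          show I e + D e + 1 < I e + D e + 2 + P e + Q e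
          omega
        · show I e + D e + 2 = I e + D e + 1 + 1
          omega
    · rintro ⟨⟨j, t⟩, ⟨j', u⟩, rfl, rfl, hj, hrel⟩
      obtain rfl : j = j' := hj
      exact mkLabel_rel sA pred succ hpred hsucc _ _ (eqv j).2 _ _ _ _
        (hD (eqv j)) (hQ (eqv j)) (hID (eqv j)) (hPQ (eqv j)) t.1 u.1 hrel
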